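/- Let (Γ, w, m) be a stable weighted n-marked graph of genus g. Then |E(Γ)| ≤ 3g − 3 + n and |V(Γ)| ≤ 2g − 2 + n. Consequently, for fixed g and n with 2g − 2 + n > 0 there are only finitely many isomorphism classes of stable weighted n-marked graphs of genus g. -/

import Mathlib

/-- A multigraph given by half-edges: a finite set of half-edges with a
fixed-point-free involution (whose orbits are the edges) and an endpoint
map to a finite set of vertices. -/
structure Multigraph where
  V : Type
  H : Type
  [fintypeV : Fintype V]
  [fintypeH : Fintype H]
  [decV : DecidableEq V]
  [decH : DecidableEq H]
  ι : H → H
  ι_invol : ∀ h, ι (ι h) = h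
  ι_ne : ∀ h, ι h ≠ h
  ep : H → V

attribute [instance] Multigraph.fintypeV Multigraph.fintypeH Multigraph.decV Multigraph.decH

namespace Multigraph

variable (G : Multigraph)

/-- Two half-edges lie in the same edge iff they agree or are swapped by the involution. -/
def edgeSetoid : Setoid G.H where
  r a b := b = a ∨ b = G.ι a
  iseqv := by
    refine ⟨fun a => Or.inl rfl, ?_, ?_⟩
    · rintro a b (rfl | rfl)
      · exact Or.inl rfl
      · exact Or.inr (G.ι_invol a).symm
    · rintro a b c (rfl | rfl) (rfl | rfl)
      · exact Or.inl rfl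
      · exact Or.inr rfl
      · exact Or.inr rfl
      · exact Or.inl (G.ι_invol a)

/-- The set of edges: orbits of the involution. -/
def E : Type := Quotient G.edgeSetoid

instance : Fintype G.E :=
  @Quotient.fintype _ _ G.edgeSetoid
    (fun a b => inferInstanceAs (Decidable (b = a ∨ b = G.ι a)))

/-- Number of edges. -/
def numE : ℕ := Fintype.card G.E

/-- Number of vertices. -/
def numV : ℕ := Fintype.card G.V

/-- First Betti number `b₁(Γ) = |E(Γ)| − |V(Γ)| + 1`. -/
def b1 : ℤ := (G.numE : ℤ) - (G.numV : ℤ) + 1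

/-- Adjacency relation on vertices. -/
def Adj (u v : G.V) : Prop := ∃ h : G.H, G.ep h = u ∧ G.ep (G.ι h) = v

/-- A multigraph is connected if it has a vertex and any two vertices are joined by a walk. -/
def Connected : Prop := Nonempty G.V ∧ ∀ u v : G.V, Relation.ReflTransGen G.Adj u v

/-- The valence of a vertex: the number of half-edges attached to it. -/
def val (v : G.V) : ℕ := Fintype.card {h : G.H // G.ep h = v}

/-- A cycle is a nonempty closed edge-walk with no backtracking. -/
def HasCycle : Prop :=
  ∃ n : ℕ, 0 < n ∧ ∃ c : ZMod n → G.H,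
    (∀ i, G.ep (G.ι (c i)) = G.ep (c (i + 1))) ∧ ∀ i, c (i + 1) ≠ G.ι (c i)

/-- Genus of a weighted graph: `b₁(Γ) + Σ_v w(v)`. -/
def genus (w : G.V → ℕ) : ℤ := G.b1 + ∑ v : G.V, (w v : ℤ)

/-- Number of markings at a vertex. -/
def nMark {n : ℕ} (m : Fin n → G.V) (v : G.V) : ℕ := Fintype.card {i : Fin n // m i = v}

/-- `n_v = val(v) + |m⁻¹(v)|`. -/
def nv {n : ℕ} (m : Fin n → G.V) (v : G.V) : ℕ := G.val v + G.nMark m v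

/-- Stability: `2w(v) − 2 + n_v > 0` at every vertex. -/
def Stable {n : ℕ} (w : G.V → ℕ) (m : Fin n → G.V) : Prop :=
  ∀ v : G.V, 0 < 2 * (w v : ℤ) - 2 + (G.nv m v : ℤ)

/-- Contraction of a non-loop edge: the two half-edges of the edge are removed and
the two (distinct) endpoints are identified. -/
def contractNonLoop (h0 : G.H) (hne : G.ep h0 ≠ G.ep (G.ι h0)) : Multigraph where
  V := {v : G.V // v ≠ G.ep (G.ι h0)}
  H := {x : G.H // x ≠ h0 ∧ x ≠ G.ι h0}
  ι x := ⟨G.ι x.1,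
    fun hc => x.2.2 (by have := congrArg G.ι hc; rwa [G.ι_invol] at this),
    fun hc => x.2.1 (by have := congrArg G.ι hc; rwa [G.ι_invol, G.ι_invol] at this)⟩
  ι_invol x := Subtype.ext (G.ι_invol x.1)
  ι_ne x hc := G.ι_ne x.1 (congrArg Subtype.val hc)
  ep x := if hx : G.ep x.1 = G.ep (G.ι h0) then ⟨G.ep h0, hne⟩ else ⟨G.ep x.1, hx⟩

/-- The map on vertices induced by contracting a non-loop edge. -/
def contractVertexMap (h0 : G.H) (hne : G.ep h0 ≠ G.ep (G.ι h0)) :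
    G.V → (G.contractNonLoop h0 hne).V :=
  fun v => if hx : v = G.ep (G.ι h0) then ⟨G.ep h0, hne⟩ else ⟨v, hx⟩

/-- Deletion of an edge (both of its half-edges); vertices are unchanged. -/
def deleteEdge (h0 : G.H) : Multigraph where
  V := G.V
  H := {x : G.H // x ≠ h0 ∧ x ≠ G.ι h0}
  ι x := ⟨G.ι x.1,
    fun hc => x.2.2 (by have := congrArg G.ι hc; rwa [G.ι_invol] at this),
    fun hc => x.2.1 (by have := congrArg G.ι hc; rwa [G.ι_invol, G.ι_invol] at this)⟩
  ι_invol x := Subtype.ext (G.ι_invol x.1)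
  ι_ne x hc := G.ι_ne x.1 (congrArg Subtype.val hc)
  ep x := G.ep x.1

end Multigraph

/-- A stable weighted `n`-marked graph of genus `g`. -/
structure StableGraph (g : ℕ) (n : ℕ) where
  graph : Multigraph
  weight : graph.V → ℕ
  mark : Fin n → graph.V
  conn : graph.Connected
  stable : graph.Stable weight mark
  genus_eq : graph.genus weight = (g : ℤ)

/-- An isomorphism of stable weighted `n`-marked graphs. -/
structure StableGraphIso {g n : ℕ} (A B : StableGraph g n) where
  eV : A.graph.V ≃ B.graph.V
  eH : A.graph.H ≃ B.graph.H
  comm_ι : ∀ h, eH (A.graph.ι h) = B.graph.ι (eH h)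
  comm_ep : ∀ h, eV (A.graph.ep h) = B.graph.ep (eH h)
  comm_w : ∀ v, B.weight (eV v) = A.weight v
  comm_m : ∀ i, eV (A.mark i) = B.mark i

namespace Multigraph

variable (G : Multigraph)

lemma sum_val : ∑ v : G.V, G.val v = Fintype.card G.H := by
  classical
  have h1 := Finset.card_eq_sum_card_fiberwise
    (f := G.ep) (s := Finset.univ) (t := Finset.univ) (fun h _ => Finset.mem_univ _)
  rw [Finset.card_univ] at h1
  have h2 : ∑ v : G.V, G.val v
      = ∑ v : G.V, (Finset.univ.filter (fun a => G.ep a = v)).card :=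
    Finset.sum_congr rfl fun v _ => by rw [val, Fintype.card_subtype]
  rw [h2]; exact h1.symm

lemma sum_nMark {n : ℕ} (m : Fin n → G.V) : ∑ v : G.V, G.nMark m v = n := by
  classical
  have h1 := Finset.card_eq_sum_card_fiberwise
    (f := m) (s := Finset.univ) (t := Finset.univ) (fun h _ => Finset.mem_univ _)
  rw [Finset.card_univ, Fintype.card_fin] at h1
  have h2 : ∑ v : G.V, G.nMark m v
      = ∑ v : G.V, (Finset.univ.filter (fun a => m a = v)).card :=
    Finset.sum_congr rfl fun v _ => by rw [nMark, Fintype.card_subtype]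
  rw [h2]; exact h1.symm

lemma card_H : Fintype.card G.H = 2 * G.numE := by
  letI dE : DecidableEq G.E := @Quotient.decidableEq _ G.edgeSetoid
    (fun a b => inferInstanceAs (Decidable (b = a ∨ b = G.ι a)))
  letI dP : ∀ e : G.E, DecidablePred (fun x : G.H => Quotient.mk G.edgeSetoid x = e) := fun e x => dE _ e
  letI dP2 : ∀ a : G.H, DecidablePred (fun x : G.H => Quotient.mk G.edgeSetoid x = Quotient.mk G.edgeSetoid a) := fun a x => dE _ _
  have key : Fintype.card G.H = ∑ e : G.E, (Finset.univ.filter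
      (fun x : G.H => Quotient.mk G.edgeSetoid x = e)).card := by
    rw [← Finset.card_univ]
    exact Finset.card_eq_sum_card_fiberwise (fun h _ => Finset.mem_univ _)
  have fib : ∀ e : G.E, (Finset.univ.filter
      (fun x : G.H => Quotient.mk G.edgeSetoid x = e)).card = 2 := by
    intro e
    induction e using Quotient.ind with
    | _ a =>
      have hfil : Finset.univ.filter
          (fun x : G.H => Quotient.mk G.edgeSetoid x = Quotient.mk G.edgeSetoid a)
          = {a, G.ι a} := by
        ext x
        simp only [Finset.mem_filter, Finset.mem_univ, true_and, Finset.mem_insert,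
          Finset.mem_singleton, Quotient.eq]
        show (a = x ∨ a = G.ι x) ↔ _
        constructor
        · rintro (rfl | rfl)
          · exact Or.inl rfl
          · exact Or.inr (G.ι_invol x).symm
        · rintro (rfl | rfl)
          · exact Or.inl rfl
          · exact Or.inr (G.ι_invol a).symm
      rw [hfil, Finset.card_insert_of_notMem (by
        simp only [Finset.mem_singleton]
        exact fun h => G.ι_ne a h.symm), Finset.card_singleton]
  rw [key, Finset.sum_congr rfl (fun e _ => fib e), Finset.sum_const, Finset.card_univ,
    smul_eq_mul, mul_comm, numE]

end Multigraph

lemma StableGraph.boundsZ {g n : ℕ} (Γ : StableGraph g n) :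
    (Γ.graph.numE : ℤ) ≤ 3 * (g : ℤ) - 3 + n ∧
    (Γ.graph.numV : ℤ) ≤ 2 * (g : ℤ) - 2 + n ∧
    ∀ v, (Γ.weight v : ℤ) ≤ 3 * (g : ℤ) - 3 + n := by
  have e1 : (∑ v : Γ.graph.V, (Γ.graph.nv Γ.mark v : ℤ)) = 2 * (Γ.graph.numE : ℤ) + n := by
    have h1 := Γ.graph.sum_val
    have h2 := Γ.graph.sum_nMark Γ.mark
    have h3 := Γ.graph.card_H
    have : (∑ v : Γ.graph.V, (Γ.graph.nv Γ.mark v : ℤ))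
        = (∑ v : Γ.graph.V, (Γ.graph.val v : ℤ)) + ∑ v : Γ.graph.V, (Γ.graph.nMark Γ.mark v : ℤ) := by
      rw [← Finset.sum_add_distrib]
      exact Finset.sum_congr rfl fun v _ => by rw [Multigraph.nv]; push_cast; ring
    rw [this, ← Nat.cast_sum, ← Nat.cast_sum, h1, h2, h3]
    push_cast; ring
  have hS : (Γ.graph.numV : ℤ)
      ≤ ∑ v : Γ.graph.V, (2 * (Γ.weight v : ℤ) - 2 + (Γ.graph.nv Γ.mark v : ℤ)) := by
    have := Finset.card_nsmul_le_sum Finset.univ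
      (fun v : Γ.graph.V => 2 * (Γ.weight v : ℤ) - 2 + (Γ.graph.nv Γ.mark v : ℤ)) 1
      (fun v _ => by beta_reduce; have := Γ.stable v; omega)
    simpa [Multigraph.numV, Finset.card_univ] using this
  have hsplit : ∑ v : Γ.graph.V, (2 * (Γ.weight v : ℤ) - 2 + (Γ.graph.nv Γ.mark v : ℤ))
      = 2 * (∑ v : Γ.graph.V, (Γ.weight v : ℤ)) - 2 * (Γ.graph.numV : ℤ)
        + (2 * (Γ.graph.numE : ℤ) + n) := by
    rw [Finset.sum_add_distrib, Finset.sum_sub_distrib, ← Finset.mul_sum,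
      Finset.sum_const, Finset.card_univ, e1]
    push_cast [Multigraph.numV]
    ring
  have hgen : (Γ.graph.numE : ℤ) - (Γ.graph.numV : ℤ) + 1
      + (∑ v : Γ.graph.V, (Γ.weight v : ℤ)) = g := by
    have := Γ.genus_eq
    rw [Multigraph.genus, Multigraph.b1] at this
    linarith
  have hw0 : 0 ≤ ∑ v : Γ.graph.V, (Γ.weight v : ℤ) :=
    Finset.sum_nonneg fun v _ => by positivity
  have hV : (Γ.graph.numV : ℤ) ≤ 2 * (g : ℤ) - 2 + n := by linarith
  refine ⟨by linarith, hV, fun v => ?_⟩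
  have hle : (Γ.weight v : ℤ) ≤ ∑ v : Γ.graph.V, (Γ.weight v : ℤ) :=
    Finset.single_le_sum (f := fun v : Γ.graph.V => (Γ.weight v : ℤ))
      (fun v _ => by positivity) (Finset.mem_univ v)
  linarith

lemma StableGraph.boundsN {g n : ℕ} (Γ : StableGraph g n) :
    Fintype.card Γ.graph.V ≤ 2 * g + n ∧ Fintype.card Γ.graph.H ≤ 6 * g + 2 * n ∧
    ∀ v, Γ.weight v ≤ 3 * g + n := by
  obtain ⟨hE, hV', hw⟩ := Γ.boundsZ
  have hV : (Fintype.card Γ.graph.V : ℤ) ≤ 2 * (g : ℤ) - 2 + n := hV'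
  have hc := Γ.graph.card_H
  refine ⟨by omega, ?_, fun v => by have := hw v; omega⟩
  have : (Fintype.card Γ.graph.H : ℤ) = 2 * (Γ.graph.numE : ℤ) := by exact_mod_cast hc
  omega

def onePointGraph : Multigraph where
  V := PUnit
  H := Empty
  fintypeV := inferInstance
  fintypeH := inferInstance
  decV := inferInstance
  decH := inferInstance
  ι := fun h => h.elim
  ι_invol := fun h => h.elim
  ι_ne := fun h => h.elim
  ep := fun h => h.elim

def onePoint (g n : ℕ) (hgn : 0 < 2 * (g : ℤ) - 2 + n) : StableGraph g n where
  graph := onePointGraph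
  weight := fun _ => g
  mark := fun _ => PUnit.unit
  conn := ⟨⟨PUnit.unit⟩, fun u v => by
    cases u; cases v; exact Relation.ReflTransGen.refl⟩
  stable := by
    intro v
    have hval : onePointGraph.val v = 0 := by
      rw [Multigraph.val]
      exact Fintype.card_eq_zero_iff.mpr ⟨fun x => x.1.elim⟩
    have hmark : onePointGraph.nMark (fun _ : Fin n => PUnit.unit) v = n := by
      delta Multigraph.nMark
      have h : ∀ i : Fin n, @Eq onePointGraph.V ((fun _ : Fin n => PUnit.unit) i) v := fun i => by cases v; rfl
      rw [Fintype.card_eq_nat_card, Nat.card_congr (Equiv.subtypeUnivEquiv h), Nat.card_eq_fintype_card, Fintype.card_fin]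
    show 0 < 2 * ((g : ℕ) : ℤ) - 2 + ((onePointGraph.val v + onePointGraph.nMark (fun _ : Fin n => PUnit.unit) v : ℕ) : ℤ)
    rw [hval, hmark]
    simpa using hgn
  genus_eq := by
    have hE : onePointGraph.numE = 0 := by
      rw [Multigraph.numE]
      exact Fintype.card_eq_zero_iff.mpr
        ⟨fun e => Quotient.ind (motive := fun _ => False) (fun (h : Empty) => h.elim) e⟩
    have hV : onePointGraph.numV = 1 := rfl
    rw [Multigraph.genus, Multigraph.b1, hE, hV]
    rw [Finset.sum_const, Finset.card_univ]
    show (0:ℤ) - 1 + 1 + (Fintype.card PUnit) • (g:ℤ) = g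
    simp

abbrev Code (g n : ℕ) : Type :=
  Fin (2*g+n+1) × Fin (6*g+2*n+1) × (Fin (6*g+2*n+1) → Fin (6*g+2*n+1)) ×
  (Fin (6*g+2*n+1) → Fin (2*g+n+1)) × (Fin (2*g+n+1) → Fin (3*g+n+1)) ×
  (Fin n → Fin (2*g+n+1))

noncomputable def encode (g n : ℕ) (Γ : StableGraph g n) : Code g n :=
  ⟨⟨Fintype.card Γ.graph.V, by have := Γ.boundsN.1; omega⟩,
   ⟨Fintype.card Γ.graph.H, by have := Γ.boundsN.2.1; omega⟩,
   fun x => if h : x.val < Fintype.card Γ.graph.H then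
      Fin.castLE (by have := Γ.boundsN.2.1; omega)
        ((Fintype.equivFin Γ.graph.H) (Γ.graph.ι ((Fintype.equivFin Γ.graph.H).symm ⟨x.val, h⟩)))
    else x,
   fun x => if h : x.val < Fintype.card Γ.graph.H then
      Fin.castLE (by have := Γ.boundsN.1; omega)
        ((Fintype.equivFin Γ.graph.V) (Γ.graph.ep ((Fintype.equivFin Γ.graph.H).symm ⟨x.val, h⟩)))
    else 0,
   fun y => if h : y.val < Fintype.card Γ.graph.V then
      ⟨Γ.weight ((Fintype.equivFin Γ.graph.V).symm ⟨y.val, h⟩),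
       by have := Γ.boundsN.2.2 ((Fintype.equivFin Γ.graph.V).symm ⟨y.val, h⟩); omega⟩
    else 0,
   fun i => Fin.castLE (by have := Γ.boundsN.1; omega)
      ((Fintype.equivFin Γ.graph.V) (Γ.mark i))⟩

lemma encode_iso {g n : ℕ} (Γ₁ Γ₂ : StableGraph g n)
    (h : encode g n Γ₁ = encode g n Γ₂) : Nonempty (StableGraphIso Γ₁ Γ₂) := by
  have hp : Fintype.card Γ₁.graph.V = Fintype.card Γ₂.graph.V :=
    congrArg (fun c : Code g n => c.1.val) h
  have hq : Fintype.card Γ₁.graph.H = Fintype.card Γ₂.graph.H :=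
    congrArg (fun c : Code g n => c.2.1.val) h
  set eV₁ := Fintype.equivFin Γ₁.graph.V with heV₁
  set eV₂ := Fintype.equivFin Γ₂.graph.V with heV₂
  set eH₁ := Fintype.equivFin Γ₁.graph.H with heH₁
  set eH₂ := Fintype.equivFin Γ₂.graph.H with heH₂
  refine ⟨⟨eV₁.trans ((finCongr hp).trans eV₂.symm),
          eH₁.trans ((finCongr hq).trans eH₂.symm), ?_, ?_, ?_, ?_⟩⟩
  · -- comm_ι
    intro a
    have hx := congrFun (congrArg (fun c : Code g n => c.2.2.1) h)
      (Fin.castLE (by have := Γ₁.boundsN.2.1; omega) (eH₁ a))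
    simp only [encode] at hx
    rw [dif_pos (by simpa using (eH₁ a).isLt), dif_pos (by simp; omega)] at hx
    simp only [Fin.coe_castLE, Fin.eta, Equiv.symm_apply_apply, ← heH₁, ← heH₂] at hx
    have hval : ((eH₁ (Γ₁.graph.ι a)).val : ℕ)
        = (eH₂ (Γ₂.graph.ι (eH₂.symm ⟨(eH₁ a).val, hq ▸ (eH₁ a).isLt⟩))).val := by
      have := congrArg Fin.val hx
      simpa using this
    have harg : (⟨(eH₁ a).val, hq ▸ (eH₁ a).isLt⟩ : Fin (Fintype.card Γ₂.graph.H))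
        = Fin.cast hq (eH₁ a) := rfl
    rw [harg] at hval
    simp only [Equiv.trans_apply, finCongr_apply]
    rw [Equiv.symm_apply_eq]
    apply Fin.ext
    simpa using hval
  · -- comm_ep
    intro a
    have hx := congrFun (congrArg (fun c : Code g n => c.2.2.2.1) h)
      (Fin.castLE (by have := Γ₁.boundsN.2.1; omega) (eH₁ a))
    simp only [encode] at hx
    rw [dif_pos (by simpa using (eH₁ a).isLt), dif_pos (by simp; omega)] at hx
    simp only [Fin.coe_castLE, Fin.eta, Equiv.symm_apply_apply, ← heH₁, ← heH₂,
      ← heV₁, ← heV₂] at hx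
    have hval : ((eV₁ (Γ₁.graph.ep a)).val : ℕ)
        = (eV₂ (Γ₂.graph.ep (eH₂.symm ⟨(eH₁ a).val, hq ▸ (eH₁ a).isLt⟩))).val := by
      have := congrArg Fin.val hx
      simpa using this
    have harg : (⟨(eH₁ a).val, hq ▸ (eH₁ a).isLt⟩ : Fin (Fintype.card Γ₂.graph.H))
        = Fin.cast hq (eH₁ a) := rfl
    rw [harg] at hval
    simp only [Equiv.trans_apply, finCongr_apply]
    rw [Equiv.symm_apply_eq]
    apply Fin.ext
    simpa using hval
  · -- comm_w
    intro v
    have hx := congrFun (congrArg (fun c : Code g n => c.2.2.2.2.1) h)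
      (Fin.castLE (by have := Γ₁.boundsN.1; omega) (eV₁ v))
    simp only [encode] at hx
    rw [dif_pos (by simpa using (eV₁ v).isLt), dif_pos (by simp; omega)] at hx
    simp only [Fin.coe_castLE, Fin.eta, Equiv.symm_apply_apply, ← heV₁, ← heV₂] at hx
    have hval : Γ₁.weight v
        = Γ₂.weight (eV₂.symm ⟨(eV₁ v).val, hp ▸ (eV₁ v).isLt⟩) := by
      have := congrArg Fin.val hx
      simpa using this
    have harg : (⟨(eV₁ v).val, hp ▸ (eV₁ v).isLt⟩ : Fin (Fintype.card Γ₂.graph.V))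
        = Fin.cast hp (eV₁ v) := rfl
    rw [harg] at hval
    simp only [Equiv.trans_apply, finCongr_apply]
    exact hval.symm
  · -- comm_m
    intro i
    have hx := congrFun (congrArg (fun c : Code g n => c.2.2.2.2.2) h) i
    simp only [encode, ← heV₁, ← heV₂] at hx
    have hval := congrArg Fin.val hx
    simp only [Fin.coe_castLE] at hval
    simp only [Equiv.trans_apply, finCongr_apply]
    rw [Equiv.symm_apply_eq]
    apply Fin.ext
    simpa using hval


/-- for a stable weighted `n`-marked graph of genus `g`,
`|E| ≤ 3g − 3 + n` and `|V| ≤ 2g − 2 + n`; consequently, for fixed `g, n` with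
`2g − 2 + n > 0` there are only finitely many isomorphism classes of stable graphs. -/
theorem edge_vertex_bounds_and_finiteness (g n : ℕ) (hgn : 0 < 2 * (g : ℤ) - 2 + n) :
    (∀ Γ : StableGraph g n,
        (Γ.graph.numE : ℤ) ≤ 3 * (g : ℤ) - 3 + n ∧
        (Γ.graph.numV : ℤ) ≤ 2 * (g : ℤ) - 2 + n) ∧
    ∃ (k : ℕ) (reps : Fin k → StableGraph g n),
      ∀ Γ : StableGraph g n, ∃ i : Fin k, Nonempty (StableGraphIso Γ (reps i)) := by
  classical
  refine ⟨fun Γ => ⟨Γ.boundsZ.1, Γ.boundsZ.2.1⟩, ?_⟩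
  let k := Fintype.card (Code g n)
  let ec : Code g n ≃ Fin k := Fintype.equivFin _
  refine ⟨k, fun i => if h : ∃ Γ : StableGraph g n, encode g n Γ = ec.symm i
      then h.choose else onePoint g n hgn, fun Γ => ?_⟩
  refine ⟨ec (encode g n Γ), ?_⟩
  have hex : ∃ Γ' : StableGraph g n, encode g n Γ' = ec.symm (ec (encode g n Γ)) :=
    ⟨Γ, by simp⟩
  beta_reduce
  rw [dif_pos hex]
  exact encode_iso Γ hex.choose (by rw [hex.choose_spec]; simp)
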